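/- arXiv:math/0506323 — 2 statements merged into one kernel-verified Lean document; each statement's English description precedes it below -/
import Mathlib

section
/- Let a and e be non-negative integers and let κ > 0. Then there exists δ > 0 such that for all real z with 0 < z < δ the series Σ_{t ≥ 0, t ≡ a+e (mod 2)} Z⁽¹⁾_t(a→e;κ) z^t converges and equals (1/√(1−4z²)) · ((1−√(1−4z²))/(2z))^{|e−a|} − (1/√(1−4z²)) · ((1−√(1−4z²))/(2z))^{e+a} · ( 1 − 2κ√(1−4z²) / ( (2−κ) + κ√(1−4z²) ) ). -/
open Finset

/-- Height of a lattice walk after `i` steps, starting at height `a`, with step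
sequence `s` (`true` = up-step `(1,1)`, `false` = down-step `(1,-1)`). -/
def ht {t : ℕ} (a : ℤ) (s : Fin t → Bool) (i : ℕ) : ℤ :=
  a + ∑ j ∈ Finset.range i, (if h : j < t then (if s ⟨j, h⟩ then (1 : ℤ) else -1) else 0)

/-- The walk starting at `(0, a)` with steps `s` ends at `(t, e)` and never
runs below the x-axis. -/
def WalkOK {t : ℕ} (a e : ℤ) (s : Fin t → Bool) : Prop :=
  ht a s t = e ∧ ∀ i ≤ t, 0 ≤ ht a s i

/-- The number of contacts of the walk with the x-axis (start and end points count). -/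
def contacts {t : ℕ} (a : ℤ) (s : Fin t → Bool) : ℕ :=
  ((Finset.range (t + 1)).filter fun i => ht a s i = 0).card

/-- A family of `n` vicious walkers, the `i`-th of length `T i`, starting at
`(0, a i)` and ending at `(T i, e i)`: no two of the walks share a lattice point
and none of the walks ever passes below the x-axis. -/
def FamilyOK {n : ℕ} (T : Fin n → ℕ) (a e : Fin n → ℤ)
    (P : (i : Fin n) → Fin (T i) → Bool) : Prop :=
  (∀ i, WalkOK (a i) (e i) (P i)) ∧
    ∀ i j, i ≠ j → ∀ m, m ≤ T i → m ≤ T j → ht (a i) (P i) m ≠ ht (a j) (P j) m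

/-- Partition function for families of vicious walkers with general lengths:
each family is weighted by `κ` to the power of its total number of contacts. -/
noncomputable def Zgen (n : ℕ) (T : Fin n → ℕ) (a e : Fin n → ℤ) (κ : ℝ) : ℝ :=
  ∑ P ∈ @Finset.filter _ (FamilyOK T a e) (Classical.decPred _) Finset.univ,
    κ ^ (∑ i : Fin n, contacts (a i) (P i))

/-- The partition function `Z^{(n)}_t(a → e; κ)`. -/
noncomputable def Zpart (n t : ℕ) (a e : Fin n → ℤ) (κ : ℝ) : ℝ :=
  Zgen n (fun _ => t) a e κ

/-- The single-walker partition function `Z^{(1)}_t(a → e; κ)`. -/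
noncomputable def Z1 (t : ℕ) (a e : ℤ) (κ : ℝ) : ℝ :=
  Zpart 1 t (fun _ => a) (fun _ => e) κ

/-- The watermelon partition function `Z^{(n)}_t(y; κ)`. -/
noncomputable def Zy (n t y : ℕ) (κ : ℝ) : ℝ :=
  Zpart n t (fun i => 2 * ((i : ℕ) : ℤ)) (fun i => (y : ℤ) + 2 * ((i : ℕ) : ℤ)) κ

/-- `Nfam n t y ℓ` is the number of families of `n` vicious walkers, the `i`-th
running from `(0, 2i-2)` to `(t, y+2i-2)`, with exactly `ℓ` contacts in total. -/
noncomputable def Nfam (n t y ℓ : ℕ) : ℕ :=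
  (@Finset.filter _
      (fun P : Fin n → Fin t → Bool =>
        FamilyOK (fun _ => t) (fun i => 2 * ((i : ℕ) : ℤ))
            (fun i => (y : ℤ) + 2 * ((i : ℕ) : ℤ)) P ∧
          (∑ i : Fin n, contacts (2 * ((i : ℕ) : ℤ)) (P i)) = ℓ)
      (Classical.decPred _) Finset.univ).card

/-- The normalized mean number of contacts `M̄^{(n)}_t(y; κ)`. -/
noncomputable def Mbar (n t y : ℕ) (κ : ℝ) : ℝ :=
  (∑' ℓ : ℕ, (ℓ : ℝ) * (Nfam n t y ℓ : ℝ) * κ ^ ℓ) /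
    (∑' ℓ : ℕ, (Nfam n t y ℓ : ℝ) * κ ^ ℓ)

/-- The binomial coefficient `C(m, k)` for integers `m`, `k`: it equals
`m!/(k!(m-k)!)` for `0 ≤ k ≤ m`, equals `1` if `k = 0` (for every integer `m`),
and equals `0` otherwise. -/
noncomputable def bin (m k : ℤ) : ℝ :=
  if 0 ≤ k ∧ k ≤ m then (Nat.choose m.toNat k.toNat : ℝ)
  else if k = 0 then 1 else 0

/-- The real factorial of an integer, with value `0` at negative integers (so
that, via `x / 0 = 0`, the convention `1/m! = 0` for negative `m` holds). -/
noncomputable def fact (m : ℤ) : ℝ :=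
  if 0 ≤ m then (m.toNat.factorial : ℝ) else 0

/-- The Pochhammer symbol `(x)_m = x (x+1) ⋯ (x+m-1)`. -/
noncomputable def poch (x : ℝ) (m : ℕ) : ℝ :=
  ∏ j ∈ Finset.range m, (x + (j : ℝ))

section Comb

lemma ht_zero {t : ℕ} (a : ℤ) (s : Fin t → Bool) : ht a s 0 = a := by
  simp [ht]

lemma ht_cons_succ {t : ℕ} (a : ℤ) (b : Bool) (s : Fin t → Bool) (i : ℕ) :
    ht a (Fin.cons b s) (i + 1) = ht (a + if b then 1 else -1) s i := by
  unfold ht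
  rw [Finset.sum_range_succ']
  have h0 : (if h : 0 < t + 1 then (if (Fin.cons b s : Fin (t+1) → Bool) ⟨0, h⟩ then (1:ℤ) else -1) else 0)
      = if b then (1:ℤ) else -1 := by
    rw [dif_pos (Nat.succ_pos t)]
    rfl
  have hstep : ∀ j : ℕ,
      (if h : j + 1 < t + 1 then (if (Fin.cons b s : Fin (t+1) → Bool) ⟨j+1, h⟩ then (1:ℤ) else -1) else 0)
        = (if h : j < t then (if s ⟨j, h⟩ then (1:ℤ) else -1) else 0) := by
    intro j
    by_cases h : j < t
    · rw [dif_pos (Nat.succ_lt_succ h), dif_pos h]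
      have : (⟨j+1, Nat.succ_lt_succ h⟩ : Fin (t+1)) = Fin.succ ⟨j, h⟩ := rfl
      rw [this, Fin.cons_succ]
    · rw [dif_neg (by omega), dif_neg h]
  rw [Finset.sum_congr rfl (fun j _ => hstep j), h0]
  ring

lemma walkOK_cons {t : ℕ} (a e : ℤ) (b : Bool) (s : Fin t → Bool) :
    WalkOK a e (Fin.cons b s) ↔ 0 ≤ a ∧ WalkOK (a + if b then 1 else -1) e s := by
  constructor
  · rintro ⟨hend, hpos⟩
    refine ⟨by simpa [ht_zero] using hpos 0 (Nat.zero_le _), ?_, ?_⟩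
    · rw [← ht_cons_succ a b s t]; exact hend
    · intro i hi
      rw [← ht_cons_succ a b s i]
      exact hpos (i+1) (Nat.succ_le_succ hi)
  · rintro ⟨ha, hend, hpos⟩
    refine ⟨by rw [ht_cons_succ]; exact hend, ?_⟩
    intro i hi
    cases i with
    | zero => simpa [ht_zero] using ha
    | succ i =>
      rw [ht_cons_succ]
      exact hpos i (Nat.le_of_succ_le_succ hi)

lemma contacts_cons {t : ℕ} (a : ℤ) (b : Bool) (s : Fin t → Bool) :
    contacts a (Fin.cons b s) = (if a = 0 then 1 else 0) + contacts (a + if b then 1 else -1) s := by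
  classical
  unfold contacts
  rw [Finset.card_filter, Finset.card_filter, Finset.sum_range_succ']
  have hstep : ∀ j : ℕ, (if ht a (Fin.cons b s) (j+1) = 0 then 1 else 0)
      = (if ht (a + if b then 1 else -1) s j = 0 then 1 else 0) := by
    intro j; rw [ht_cons_succ]
  rw [Finset.sum_congr rfl (fun j _ => hstep j), ht_zero]
  omega

end Comb
section Z1L

open Classical in
lemma Z1_eq (t : ℕ) (a e : ℤ) (κ : ℝ) :
    Z1 t a e κ = ∑ s : Fin t → Bool, if WalkOK a e s then κ ^ contacts a s else 0 := by
  classical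
  unfold Z1 Zpart Zgen
  rw [Finset.sum_filter]
  refine Fintype.sum_equiv (Equiv.funUnique (Fin 1) (Fin t → Bool)) _ _ ?_
  intro P
  have hfam : FamilyOK (fun _ => t) (fun _ => a) (fun _ => e) P ↔ WalkOK a e (P 0) := by
    constructor
    · rintro ⟨h1, _⟩; exact h1 0
    · intro h
      refine ⟨fun i => by rw [Subsingleton.elim i 0]; exact h, fun i j hij => ?_⟩
      exact absurd (Subsingleton.elim i j) hij
  have hc : (∑ i : Fin 1, contacts a (P i)) = contacts a (P 0) := by
    simp
  simp only [hfam, hc]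
  rfl

lemma Z1_zero (a e : ℤ) (κ : ℝ) :
    Z1 0 a e κ = if a = e ∧ 0 ≤ a then κ ^ (if a = 0 then 1 else 0) else 0 := by
  classical
  rw [Z1_eq]
  rw [Fintype.sum_eq_single (fun _ : Fin 0 => false)
    (fun s hs => absurd (funext fun i => Fin.elim0 i) hs)]
  have hht : ∀ i : ℕ, ht a (fun _ : Fin 0 => false) i = a := by
    intro i; unfold ht; simp
  have hwalk : WalkOK a e (fun _ : Fin 0 => false) ↔ (a = e ∧ 0 ≤ a) := by
    unfold WalkOK
    simp only [hht]
    constructor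
    · rintro ⟨h1, h2⟩; exact ⟨h1, h2 0 (le_refl 0)⟩
    · rintro ⟨h1, h2⟩; exact ⟨h1, fun i _ => h2⟩
  have hcon : contacts a (fun _ : Fin 0 => false) = if a = 0 then 1 else 0 := by
    unfold contacts
    simp only [hht]
    by_cases h : a = 0 <;> simp [h]
  rw [hwalk, hcon]
  by_cases h : a = e ∧ 0 ≤ a
  · rw [if_pos h, if_pos h]
  · rw [if_neg h, if_neg h]

lemma walkOK_neg {t : ℕ} (a e : ℤ) (s : Fin t → Bool) (ha : a < 0) : ¬ WalkOK a e s := by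
  rintro ⟨_, hpos⟩
  have := hpos 0 (Nat.zero_le t)
  rw [ht_zero] at this
  omega

open Classical in
lemma Z1_succ_split (t : ℕ) (a e : ℤ) (κ : ℝ) :
    Z1 (t+1) a e κ =
      (∑ s : Fin t → Bool, if WalkOK a e (Fin.cons true s) then κ ^ contacts a (Fin.cons true s) else 0)
      + (∑ s : Fin t → Bool, if WalkOK a e (Fin.cons false s) then κ ^ contacts a (Fin.cons false s) else 0) := by
  classical
  rw [Z1_eq]
  rw [← Equiv.sum_comp (Fin.consEquiv fun _ => Bool)
    (fun s : Fin (t+1) → Bool => if WalkOK a e s then κ ^ contacts a s else 0)]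
  rw [Fintype.sum_prod_type, Fintype.sum_bool]
  rfl

lemma Z1_succ_pos (t : ℕ) (a e : ℤ) (κ : ℝ) (ha : 1 ≤ a) :
    Z1 (t+1) a e κ = Z1 t (a-1) e κ + Z1 t (a+1) e κ := by
  classical
  rw [Z1_succ_split, Z1_eq, Z1_eq]
  have hne : ¬ (a = 0) := by omega
  have h1 : ∀ s : Fin t → Bool,
      (if WalkOK a e (Fin.cons true s) then κ ^ contacts a (Fin.cons true s) else 0)
        = (if WalkOK (a+1) e s then κ ^ contacts (a+1) s else 0) := by
    intro s
    rw [walkOK_cons, contacts_cons]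
    rw [show (if (true : Bool) then (1:ℤ) else -1) = 1 from rfl]
    rw [if_neg hne, zero_add]
    by_cases h : WalkOK (a+1) e s
    · rw [if_pos ⟨by omega, h⟩, if_pos h]
    · rw [if_neg (fun hh => h hh.2), if_neg h]
  have h2 : ∀ s : Fin t → Bool,
      (if WalkOK a e (Fin.cons false s) then κ ^ contacts a (Fin.cons false s) else 0)
        = (if WalkOK (a-1) e s then κ ^ contacts (a-1) s else 0) := by
    intro s
    rw [walkOK_cons, contacts_cons]
    rw [show (if (false : Bool) then (1:ℤ) else -1) = -1 from rfl]
    rw [show a + (-1:ℤ) = a - 1 by ring]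
    rw [if_neg hne, zero_add]
    by_cases h : WalkOK (a-1) e s
    · rw [if_pos ⟨by omega, h⟩, if_pos h]
    · rw [if_neg (fun hh => h hh.2), if_neg h]
  rw [Finset.sum_congr rfl (fun s _ => h1 s), Finset.sum_congr rfl (fun s _ => h2 s)]
  ring

lemma Z1_succ_zero (t : ℕ) (e : ℤ) (κ : ℝ) :
    Z1 (t+1) 0 e κ = κ * Z1 t 1 e κ := by
  classical
  rw [Z1_succ_split, Z1_eq]
  have h1 : ∀ s : Fin t → Bool,
      (if WalkOK 0 e (Fin.cons true s) then κ ^ contacts 0 (Fin.cons true s) else 0)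
        = κ * (if WalkOK 1 e s then κ ^ contacts 1 s else 0) := by
    intro s
    rw [walkOK_cons, contacts_cons]
    rw [show (if (true : Bool) then (1:ℤ) else -1) = 1 from rfl]
    rw [show ((0:ℤ) + 1) = 1 by ring, if_pos rfl]
    by_cases h : WalkOK 1 e s
    · rw [if_pos ⟨le_refl 0, h⟩, if_pos h]; ring
    · rw [if_neg (fun hh => h hh.2), if_neg h]; ring
  have h2 : ∀ s : Fin t → Bool,
      (if WalkOK 0 e (Fin.cons false s) then κ ^ contacts 0 (Fin.cons false s) else 0) = 0 := by
    intro s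
    rw [walkOK_cons]
    have hno : ¬ WalkOK (0 + if (false : Bool) then (1:ℤ) else -1) e s := by
      rw [show ((0:ℤ) + if (false : Bool) then (1:ℤ) else -1) = -1 from rfl]
      exact walkOK_neg _ _ _ (by norm_num)
    rw [if_neg (fun hh => hno hh.2)]
  rw [Finset.sum_congr rfl (fun s _ => h1 s), Finset.sum_congr rfl (fun s _ => h2 s)]
  rw [← Finset.mul_sum]
  simp

end Z1L
section Par

lemma ht_step {t : ℕ} (a : ℤ) (s : Fin t → Bool) (i : ℕ) (hit : i < t) :
    ht a s (i+1) = ht a s i + (if s ⟨i, hit⟩ then 1 else -1) := by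
  unfold ht
  rw [Finset.sum_range_succ, dif_pos hit]
  ring

lemma ht_parity {t : ℕ} (a : ℤ) (s : Fin t → Bool) : ∀ i, i ≤ t → (ht a s i - a - i) % 2 = 0 := by
  intro i
  induction i with
  | zero => intro _; rw [ht_zero]; omega
  | succ i ih =>
    intro hi
    have hit : i < t := by omega
    have := ih (by omega)
    rw [ht_step a s i hit]
    by_cases hb : s ⟨i, hit⟩ = true
    · rw [if_pos hb]; push_cast; omega
    · rw [if_neg hb]; push_cast; omega

lemma Z1_parity (t a e : ℕ) (κ : ℝ) (h : ¬ t % 2 = (a+e) % 2) : Z1 t (a:ℤ) (e:ℤ) κ = 0 := by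
  classical
  rw [Z1_eq]
  apply Finset.sum_eq_zero
  intro s _
  rw [if_neg]
  rintro ⟨hend, -⟩
  have hp := ht_parity (a:ℤ) s t le_rfl
  rw [hend] at hp
  omega

lemma contacts_le {t : ℕ} (a : ℤ) (s : Fin t → Bool) : contacts a s ≤ t + 1 := by
  unfold contacts
  exact le_trans (Finset.card_filter_le _ _) (le_of_eq (Finset.card_range _))

lemma Z1_nonneg (t : ℕ) (a e : ℤ) (κ : ℝ) (hκ : 0 < κ) : 0 ≤ Z1 t a e κ := by
  classical
  rw [Z1_eq]
  apply Finset.sum_nonneg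
  intro s _
  split_ifs
  · positivity
  · exact le_refl 0

lemma Z1_le (t : ℕ) (a e : ℤ) (κ : ℝ) (hκ : 0 < κ) :
    Z1 t a e κ ≤ (max κ 1) ^ (t+1) * 2 ^ t := by
  classical
  rw [Z1_eq]
  have hM1 : (1:ℝ) ≤ max κ 1 := le_max_right _ _
  have hbound : ∀ s : Fin t → Bool,
      (if WalkOK a e s then κ ^ contacts a s else 0) ≤ (max κ 1) ^ (t+1) := by
    intro s
    split_ifs
    · calc κ ^ contacts a s ≤ (max κ 1) ^ contacts a s :=
            pow_le_pow_left₀ hκ.le (le_max_left _ _) _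
        _ ≤ (max κ 1) ^ (t+1) := pow_le_pow_right₀ hM1 (contacts_le a s)
    · positivity
  calc (∑ s : Fin t → Bool, if WalkOK a e s then κ ^ contacts a s else 0)
      ≤ ∑ _s : Fin t → Bool, (max κ 1) ^ (t+1) := Finset.sum_le_sum (fun s _ => hbound s)
    _ = (2^t : ℕ) * (max κ 1) ^ (t+1) := by
        rw [Finset.sum_const, nsmul_eq_mul]
        congr 1
        norm_cast
        simp [Finset.card_univ]
    _ = (max κ 1) ^ (t+1) * 2 ^ t := by push_cast; ring

end Par
section Ser

lemma key3 (B z : ℝ) (h : z*B^2 = B - z) (k : ℕ) :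
    B^(k+1) - z*B^(k+2) - z*B^k = 0 := by
  have h2 : B - z*B^2 - z = 0 := by linarith
  calc B^(k+1) - z*B^(k+2) - z*B^k = B^k * (B - z*B^2 - z) := by ring
    _ = 0 := by rw [h2]; ring

lemma Z1_term_le (e : ℕ) (κ z : ℝ) (hκ : 0 < κ) (hz : 0 < z) (b : ℤ) (t : ℕ) :
    Z1 t b e κ * z ^ t ≤ (max κ 1) * (2*(max κ 1)*z)^t := by
  calc Z1 t b e κ * z^t ≤ ((max κ 1)^(t+1) * 2^t) * z^t :=
        mul_le_mul_of_nonneg_right (Z1_le t b e κ hκ) (le_of_lt (pow_pos hz t))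
    _ = (max κ 1) * (2*(max κ 1)*z)^t := by
        rw [mul_pow, mul_pow, pow_succ]; ring

lemma summable_Z1 (e : ℕ) (κ z : ℝ) (hκ : 0 < κ) (hz : 0 < z)
    (hz2 : 2*(max κ 1)*z < 1) (b : ℤ) :
    Summable (fun t : ℕ => Z1 t b e κ * z ^ t) := by
  have hM0 : (0:ℝ) < max κ 1 := lt_of_lt_of_le one_pos (le_max_right _ _)
  have hgeo : Summable (fun t : ℕ => (max κ 1) * (2*(max κ 1)*z)^t) :=
    (summable_geometric_of_lt_one (by positivity) hz2).mul_left _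
  exact Summable.of_nonneg_of_le
    (fun t => mul_nonneg (Z1_nonneg _ _ _ _ hκ) (le_of_lt (pow_pos hz t)))
    (fun t => Z1_term_le e κ z hκ hz b t) hgeo

lemma Z1_tsum_bound (e : ℕ) (κ z : ℝ) (hκ : 0 < κ) (hz : 0 < z)
    (hz2 : 2*(max κ 1)*z < 1) (b : ℤ) :
    |∑' t : ℕ, Z1 t b e κ * z ^ t| ≤ (max κ 1) * (1 - 2*(max κ 1)*z)⁻¹ := by
  have hM0 : (0:ℝ) < max κ 1 := lt_of_lt_of_le one_pos (le_max_right _ _)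
  have hgeo : Summable (fun t : ℕ => (max κ 1) * (2*(max κ 1)*z)^t) :=
    (summable_geometric_of_lt_one (by positivity) hz2).mul_left _
  have h1 : (0:ℝ) ≤ ∑' t : ℕ, Z1 t b e κ * z ^ t :=
    tsum_nonneg (fun t => mul_nonneg (Z1_nonneg _ _ _ _ hκ) (le_of_lt (pow_pos hz t)))
  rw [abs_of_nonneg h1]
  calc (∑' t : ℕ, Z1 t b e κ * z ^ t) ≤ ∑' t : ℕ, (max κ 1) * (2*(max κ 1)*z)^t :=
        Summable.tsum_le_tsum (Z1_term_le e κ z hκ hz b) (summable_Z1 e κ z hκ hz hz2 b) hgeo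
    _ = (max κ 1) * (1 - 2*(max κ 1)*z)⁻¹ := by
        rw [tsum_mul_left, tsum_geometric_of_lt_one (by positivity) hz2]

end Ser
section Srec

lemma Srec1 (e : ℕ) (κ z : ℝ) (hκ : 0 < κ) (hz : 0 < z)
    (hz2 : 2*(max κ 1)*z < 1) (b : ℤ) (hb : 0 ≤ b) :
    (∑' t : ℕ, Z1 t (b+1) e κ * z^t)
      = (if b+1 = (e:ℤ) then 1 else 0)
        + z*((∑' t : ℕ, Z1 t b e κ * z^t) + (∑' t : ℕ, Z1 t (b+2) e κ * z^t)) := by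
  rw [Summable.tsum_eq_zero_add (summable_Z1 e κ z hκ hz hz2 (b+1))]
  have h0 : Z1 0 (b+1) (e:ℤ) κ * z^0 = if b+1 = (e:ℤ) then 1 else 0 := by
    rw [pow_zero, mul_one, Z1_zero]
    by_cases h : b+1 = (e:ℤ)
    · rw [if_pos ⟨h, by omega⟩, if_pos h, if_neg (by omega), pow_zero]
    · rw [if_neg (fun hh => h hh.1), if_neg h]
  have htail : ∀ t : ℕ, Z1 (t+1) (b+1) (e:ℤ) κ * z^(t+1)
      = z*(Z1 t b e κ * z^t) + z*(Z1 t (b+2) e κ * z^t) := by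
    intro t
    rw [Z1_succ_pos t (b+1) e κ (by omega)]
    rw [show b+1-1 = b by ring, show b+1+1 = b+2 by ring, pow_succ]
    ring
  rw [tsum_congr htail, h0]
  rw [Summable.tsum_add ((summable_Z1 e κ z hκ hz hz2 b).mul_left z)
      ((summable_Z1 e κ z hκ hz hz2 (b+2)).mul_left z)]
  rw [tsum_mul_left, tsum_mul_left]
  ring

lemma Srec0 (e : ℕ) (κ z : ℝ) (hκ : 0 < κ) (hz : 0 < z)
    (hz2 : 2*(max κ 1)*z < 1) :
    (∑' t : ℕ, Z1 t 0 e κ * z^t)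
      = (if (0:ℤ) = (e:ℤ) then κ else 0) + κ*z*(∑' t : ℕ, Z1 t 1 e κ * z^t) := by
  rw [Summable.tsum_eq_zero_add (summable_Z1 e κ z hκ hz hz2 0)]
  have h0 : Z1 0 0 (e:ℤ) κ * z^0 = if (0:ℤ) = (e:ℤ) then κ else 0 := by
    rw [pow_zero, mul_one, Z1_zero]
    by_cases h : (0:ℤ) = (e:ℤ)
    · rw [if_pos ⟨h, le_refl 0⟩, if_pos h, if_pos rfl, pow_one]
    · rw [if_neg (fun hh => h hh.1), if_neg h]
  have htail : ∀ t : ℕ, Z1 (t+1) 0 (e:ℤ) κ * z^(t+1)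
      = (κ*z)*(Z1 t 1 e κ * z^t) := by
    intro t
    rw [Z1_succ_zero t e κ, pow_succ]
    ring
  rw [tsum_congr htail, h0, tsum_mul_left]

end Srec

section Falg

noncomputable def Fnice (e : ℕ) (B Q U : ℝ) (b : ℕ) : ℝ :=
  B^(((e:ℤ)-(b:ℤ)).natAbs)/Q - B^(e+b)/Q + B^(e+b)*U

lemma Fnice_rec1 (e : ℕ) (B Q U z : ℝ) (hQ0 : Q ≠ 0)
    (hk : z*B^2 = B - z) (hQB : 1 - 2*z*B = Q) (b : ℕ) :
    Fnice e B Q U (b+1) = (if b+1 = e then 1 else 0) + z*(Fnice e B Q U b + Fnice e B Q U (b+2)) := by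
  have hQinv : Q * Q⁻¹ = 1 := mul_inv_cancel₀ hQ0
  have h2 := key3 B z hk (e+b)
  have hp1 : e + (b+1) = (e+b) + 1 := by ring
  have hp2 : e + (b+2) = (e+b) + 2 := by ring
  rcases lt_trichotomy (b+1) e with hlt | heq | hgt
  · obtain ⟨m, hm⟩ : ∃ m, e = (b+2) + m := ⟨e - (b+2), by omega⟩
    have e1 : ((e:ℤ)-((b+1:ℕ):ℤ)).natAbs = m+1 := by omega
    have e2 : ((e:ℤ)-((b:ℕ):ℤ)).natAbs = m+2 := by omega
    have e3 : ((e:ℤ)-((b+2:ℕ):ℤ)).natAbs = m := by omega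
    have h1 := key3 B z hk m
    simp only [Fnice, e1, e2, e3, hp1, hp2, if_neg (by omega : ¬ (b+1 = e))]
    linear_combination Q⁻¹ * h1 + (U - Q⁻¹) * h2
  · have e1 : ((e:ℤ)-((b+1:ℕ):ℤ)).natAbs = 0 := by omega
    have e2 : ((e:ℤ)-((b:ℕ):ℤ)).natAbs = 1 := by omega
    have e3 : ((e:ℤ)-((b+2:ℕ):ℤ)).natAbs = 1 := by omega
    simp only [Fnice, e1, e2, e3, hp1, hp2, if_pos heq]
    linear_combination Q⁻¹*hQB + hQinv + (U - Q⁻¹) * h2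
  · obtain ⟨k, hkk⟩ : ∃ k, b+1 = e + (k+1) := ⟨b - e, by omega⟩
    have e1 : ((e:ℤ)-((b+1:ℕ):ℤ)).natAbs = k+1 := by omega
    have e2 : ((e:ℤ)-((b:ℕ):ℤ)).natAbs = k := by omega
    have e3 : ((e:ℤ)-((b+2:ℕ):ℤ)).natAbs = k+2 := by omega
    have h1 := key3 B z hk k
    simp only [Fnice, e1, e2, e3, hp1, hp2, if_neg (by omega : ¬ (b+1 = e))]
    linear_combination Q⁻¹ * h1 + (U - Q⁻¹) * h2

lemma Fnice_rec0 (e : ℕ) (B Q U z κ : ℝ) (hQ0 : Q ≠ 0)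
    (hk : z*B^2 = B - z) (hQB : 1 - 2*z*B = Q) (hU : U*(1-κ*z*B) = κ) :
    Fnice e B Q U 0 = (if 0 = e then κ else 0) + κ*z*(Fnice e B Q U 1) := by
  rcases Nat.eq_zero_or_pos e with he | he
  · subst he
    simp only [Fnice]
    norm_num
    linear_combination hU
  · obtain ⟨k, hkk⟩ : ∃ k, e = k+1 := ⟨e - 1, by omega⟩
    have e1 : ((e:ℤ)-((0:ℕ):ℤ)).natAbs = k+1 := by omega
    have e2 : ((e:ℤ)-((1:ℕ):ℤ)).natAbs = k := by omega
    have hp1 : e + 0 = k+1 := by omega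
    have hp2 : e + 1 = k+2 := by omega
    have hQinv : Q * Q⁻¹ = 1 := mul_inv_cancel₀ hQ0
    simp only [Fnice, e1, e2, hp1, hp2, if_neg (by omega : ¬ (0 = e))]
    linear_combination B^(k+1)*hU - κ*B^(k+1)*hQinv - κ*B^k*Q⁻¹*hk - κ*B^(k+1)*Q⁻¹*hQB

end Falg
section Uniq

lemma uniq (D : ℕ → ℝ) (z κ K : ℝ) (hK : ∀ b, |D b| ≤ K)
    (hrec1 : ∀ b, D (b+1) = z*(D b + D (b+2)))
    (hrec0 : D 0 = κ*z*(D 1))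
    (hz : 0 ≤ z) (hκ : 0 ≤ κ) (h2z : 2*z < 1) (hκz : κ*z < 1) :
    ∀ b, D b = 0 := by
  set r := max (2*z) (κ*z) with hr
  have hr0 : 0 ≤ r := le_trans (by positivity) (le_max_left _ _)
  have hr1 : r < 1 := max_lt h2z hκz
  have hK0 : 0 ≤ K := le_trans (abs_nonneg _) (hK 0)
  have key : ∀ n b, |D b| ≤ r^n * K := by
    intro n
    induction n with
    | zero => intro b; simpa using hK b
    | succ n ih =>
      intro b
      cases b with
      | zero =>
        rw [hrec0, abs_mul, abs_of_nonneg (by positivity : (0:ℝ) ≤ κ*z)]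
        calc κ*z * |D 1| ≤ κ*z * (r^n * K) :=
              mul_le_mul_of_nonneg_left (ih 1) (by positivity)
          _ ≤ r * (r^n * K) :=
              mul_le_mul_of_nonneg_right (le_max_right _ _) (by positivity)
          _ = r^(n+1) * K := by ring
      | succ b =>
        rw [hrec1 b, abs_mul, abs_of_nonneg hz]
        calc z * |D b + D (b+2)| ≤ z * (|D b| + |D (b+2)|) :=
              mul_le_mul_of_nonneg_left (abs_add_le _ _) hz
          _ ≤ z * (r^n * K + r^n * K) :=
              mul_le_mul_of_nonneg_left (add_le_add (ih b) (ih (b+2))) hz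
          _ = (2*z) * (r^n * K) := by ring
          _ ≤ r * (r^n * K) :=
              mul_le_mul_of_nonneg_right (le_max_left _ _) (by positivity)
          _ = r^(n+1) * K := by ring
  intro b
  have hlim : Filter.Tendsto (fun n : ℕ => r^n * K) Filter.atTop (nhds 0) := by
    simpa using (tendsto_pow_atTop_nhds_zero_of_lt_one hr0 hr1).mul_const K
  have hle : |D b| ≤ 0 := ge_of_tendsto' hlim (fun n => key n b)
  exact abs_eq_zero.mp (le_antisymm hle (abs_nonneg _))

end Uniq
set_option maxHeartbeats 1000000 in
/-- generating function of the single-walker partition functions. -/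
theorem statement1 (a e : ℕ) (κ : ℝ) (hκ : 0 < κ) :
    ∃ δ > (0 : ℝ), ∀ z : ℝ, 0 < z → z < δ →
      Summable (fun t : ℕ =>
        if t % 2 = (a + e) % 2 then Z1 t a e κ * z ^ t else 0) ∧
      (∑' t : ℕ, (if t % 2 = (a + e) % 2 then Z1 t a e κ * z ^ t else 0)) =
        (1 / Real.sqrt (1 - 4 * z ^ 2)) *
            ((1 - Real.sqrt (1 - 4 * z ^ 2)) / (2 * z)) ^ (((e : ℤ) - (a : ℤ)).natAbs) -
          (1 / Real.sqrt (1 - 4 * z ^ 2)) *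
            ((1 - Real.sqrt (1 - 4 * z ^ 2)) / (2 * z)) ^ (e + a) *
            (1 - 2 * κ * Real.sqrt (1 - 4 * z ^ 2) /
                ((2 - κ) + κ * Real.sqrt (1 - 4 * z ^ 2))) := by
  have hM1 : (1:ℝ) ≤ max κ 1 := le_max_right _ _
  have hMκ : κ ≤ max κ 1 := le_max_left _ _
  have hM0 : (0:ℝ) < max κ 1 := lt_of_lt_of_le one_pos hM1
  refine ⟨(8*(max κ 1))⁻¹, by positivity, ?_⟩
  intro z hz hzδ
  -- numerics
  have hz8 : z < 1/8 := by
    have h1 : (8*(max κ 1))⁻¹ ≤ (8:ℝ)⁻¹ := by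
      apply inv_anti₀ (by norm_num)
      nlinarith
    calc z < (8*(max κ 1))⁻¹ := hzδ
      _ ≤ (8:ℝ)⁻¹ := h1
      _ = 1/8 := by norm_num
  have hMz : (max κ 1)*z < 1/8 := by
    have := mul_lt_mul_of_pos_left hzδ hM0
    have h2 : (max κ 1) * (8*(max κ 1))⁻¹ = 1/8 := by
      field_simp
    linarith [this, h2.le, h2.ge]
  have hzM : 2*(max κ 1)*z < 1 := by nlinarith
  have hκz : κ*z < 1 := by nlinarith [mul_le_mul_of_nonneg_right hMκ hz.le]
  have h2z : 2*z < 1 := by linarith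
  have h4z : 4*z^2 < 1 := by nlinarith
  -- the algebraic quantities
  set Q := Real.sqrt (1 - 4 * z ^ 2) with hQdef
  have hQsq : Q^2 = 1 - 4*z^2 := Real.sq_sqrt (by nlinarith)
  have hQpos : 0 < Q := Real.sqrt_pos.mpr (by nlinarith)
  have hQne : Q ≠ 0 := ne_of_gt hQpos
  have hQ1 : Q ≤ 1 := Real.sqrt_le_one.mpr (by nlinarith)
  set B := (1 - Q) / (2 * z) with hBdef
  have h2zB : 2*z*B = 1 - Q := by
    rw [hBdef]
    field_simp
  have hQB : 1 - 2*z*B = Q := by linarith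
  have hk : z*B^2 = B - z := by
    have hk4 : 4*z*(z*B^2) = 4*z*(B - z) := by
      linear_combination (2*z*B + 1 - Q - 2)*h2zB + hQsq
    exact mul_left_cancel₀ (by positivity : (4*z) ≠ 0) hk4
  have hB0 : 0 ≤ B := by
    rw [hBdef]
    apply div_nonneg (by linarith) (by linarith)
  have key2 : 2*z*(2*z - B) = Q - Q^2 := by linear_combination hQsq - h2zB
  have hB2z : B ≤ 2*z := by
    nlinarith [key2, mul_nonneg hQpos.le (by linarith : (0:ℝ) ≤ 1-Q), hz]
  have hB1 : B < 1 := lt_of_le_of_lt hB2z (by linarith)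
  have hbd1 : κ*(1-Q) ≤ 4*κ*z^2 := by
    have h := mul_le_mul_of_nonneg_left hB2z (by positivity : (0:ℝ) ≤ 2*z*κ)
    nlinarith [h2zB]
  have hbd2 : 4*κ*z^2 < 1 := by
    nlinarith [mul_le_mul_of_nonneg_right hMκ hz.le, hMz, hz8, hz]
  have hden : 1 < (2-κ) + κ*Q := by nlinarith
  have hdne : (2-κ) + κ*Q ≠ 0 := by
    intro h
    rw [h] at hden
    linarith
  set U := 2*κ/((2-κ)+κ*Q) with hUdef
  have hU : U*(1-κ*z*B) = κ := by
    rw [hUdef, div_mul_eq_mul_div, div_eq_iff hdne]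
    linear_combination -κ^2 * h2zB
  have hU0 : 0 ≤ U := by
    rw [hUdef]
    apply div_nonneg (by linarith) (by linarith)
  -- triangle inequality helper
  have tri : ∀ x y : ℝ, |x - y| ≤ |x| + |y| := fun x y => by
    calc |x - y| = |x + (-y)| := by ring_nf
      _ ≤ |x| + |-y| := abs_add_le _ _
      _ = |x| + |y| := by rw [abs_neg]
  -- bound on Fnice
  have hpow : ∀ k : ℕ, B^k ≤ 1 := fun k => pow_le_one₀ hB0 hB1.le
  have hFb : ∀ b : ℕ, |Fnice e B Q U b| ≤ 1/Q + 1/Q + U := by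
    intro b
    simp only [Fnice]
    have hb1 : |B^(((e:ℤ)-(b:ℤ)).natAbs)/Q| ≤ 1/Q := by
      rw [abs_of_nonneg (div_nonneg (pow_nonneg hB0 _) hQpos.le)]
      gcongr
      exact hpow _
    have hb2 : |B^(e+b)/Q| ≤ 1/Q := by
      rw [abs_of_nonneg (div_nonneg (pow_nonneg hB0 _) hQpos.le)]
      gcongr
      exact hpow _
    have hb3 : |B^(e+b)*U| ≤ U := by
      rw [abs_of_nonneg (mul_nonneg (pow_nonneg hB0 _) hU0)]
      calc B^(e+b)*U ≤ 1*U := mul_le_mul_of_nonneg_right (hpow _) hU0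
        _ = U := one_mul U
    calc |B^(((e:ℤ)-(b:ℤ)).natAbs)/Q - B^(e+b)/Q + B^(e+b)*U|
        ≤ |B^(((e:ℤ)-(b:ℤ)).natAbs)/Q - B^(e+b)/Q| + |B^(e+b)*U| := abs_add_le _ _
      _ ≤ (|B^(((e:ℤ)-(b:ℤ)).natAbs)/Q| + |B^(e+b)/Q|) + |B^(e+b)*U| :=
          add_le_add (tri _ _) le_rfl
      _ ≤ 1/Q + 1/Q + U := by linarith [hb1, hb2, hb3]
  -- D = S - F vanishes identically
  have hcast1 : ∀ b : ℕ, ((b+1:ℕ):ℤ) = (b:ℤ)+1 := fun b => by push_cast; ring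
  have hcast2 : ∀ b : ℕ, ((b+2:ℕ):ℤ) = (b:ℤ)+2 := fun b => by push_cast; ring
  have hDzero := uniq (fun b : ℕ => (∑' t : ℕ, Z1 t (b:ℤ) (e:ℤ) κ * z^t) - Fnice e B Q U b)
    z κ ((max κ 1) * (1 - 2*(max κ 1)*z)⁻¹ + (1/Q + 1/Q + U))
    (fun b => by
      calc |(∑' t : ℕ, Z1 t (b:ℤ) (e:ℤ) κ * z^t) - Fnice e B Q U b|
          ≤ |∑' t : ℕ, Z1 t (b:ℤ) (e:ℤ) κ * z^t| + |Fnice e B Q U b| := tri _ _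
        _ ≤ (max κ 1) * (1 - 2*(max κ 1)*z)⁻¹ + (1/Q + 1/Q + U) :=
            add_le_add (Z1_tsum_bound e κ z hκ hz hzM b) (hFb b))
    (fun b => by
      show (∑' t : ℕ, Z1 t ((b+1:ℕ):ℤ) (e:ℤ) κ * z^t) - Fnice e B Q U (b+1)
        = z*(((∑' t : ℕ, Z1 t (b:ℤ) (e:ℤ) κ * z^t) - Fnice e B Q U b)
            + ((∑' t : ℕ, Z1 t ((b+2:ℕ):ℤ) (e:ℤ) κ * z^t) - Fnice e B Q U (b+2)))
      simp only [hcast1, hcast2, show ((b:ℤ)+1+1) = ((b:ℤ)+2) from by ring]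
      rw [Srec1 e κ z hκ hz hzM (b:ℤ) (Int.natCast_nonneg b),
        Fnice_rec1 e B Q U z hQne hk hQB b]
      have hif : (if (b:ℤ)+1 = (e:ℤ) then (1:ℝ) else 0) = (if b+1 = e then (1:ℝ) else 0) := by
        by_cases h : b+1 = e
        · rw [if_pos (by omega), if_pos h]
        · rw [if_neg (by omega), if_neg h]
      rw [hif]
      ring)
    (by
      show (∑' t : ℕ, Z1 t ((0:ℕ):ℤ) (e:ℤ) κ * z^t) - Fnice e B Q U 0
        = κ*z*((∑' t : ℕ, Z1 t ((1:ℕ):ℤ) (e:ℤ) κ * z^t) - Fnice e B Q U 1)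
      simp only [Nat.cast_zero, Nat.cast_one]
      rw [Srec0 e κ z hκ hz hzM, Fnice_rec0 e B Q U z κ hQne hk hQB hU]
      have hif : (if (0:ℤ) = (e:ℤ) then κ else 0) = (if 0 = e then κ else 0) := by
        by_cases h : 0 = e
        · rw [if_pos (by omega), if_pos h]
        · rw [if_neg (by omega), if_neg h]
      rw [hif]
      ring)
    hz.le hκ.le h2z hκz
  -- conclude
  have hfun : (fun t : ℕ => if t % 2 = (a + e) % 2 then Z1 t a e κ * z ^ t else 0)
      = fun t : ℕ => Z1 t (a:ℤ) (e:ℤ) κ * z^t := by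
    funext t
    by_cases h : t % 2 = (a + e) % 2
    · rw [if_pos h]
    · rw [if_neg h, Z1_parity t a e κ h, zero_mul]
  constructor
  · rw [hfun]
    exact summable_Z1 e κ z hκ hz hzM a
  · rw [hfun]
    have hSa : (∑' t : ℕ, Z1 t (a:ℤ) (e:ℤ) κ * z^t) = Fnice e B Q U a :=
      sub_eq_zero.mp (hDzero a)
    rw [hSa]
    simp only [Fnice, hUdef]
    field_simp
    ring
end

section
/- Let n ≥ 1, let t be a non-negative integer, and let a = (a₁,…,aₙ) and e = (e₁,…,eₙ) be tuples of non-negative integers with 0 ≤ a₁ < a₂ < … < aₙ, 0 ≤ e₁ < e₂ < … < eₙ, all aᵢ of the same parity, all eᵢ of the same parity, and aᵢ + eᵢ ≡ t (mod 2) for all i. Then for every κ > 0, Z⁽ⁿ⁾_t(a→e;κ) = det_{1≤i,j≤n}( Z⁽¹⁾_t(a_j→e_i;κ) ). -/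
open Finset

namespace LGVaux

/-- single step value -/
def step {t : ℕ} (s : Fin t → Bool) (l : ℕ) : ℤ :=
  if h : l < t then (if s ⟨l, h⟩ then (1 : ℤ) else -1) else 0

lemma ht_eq {t : ℕ} (a : ℤ) (s : Fin t → Bool) (m : ℕ) :
    ht a s m = a + ∑ l ∈ Finset.range m, step s l := rfl

lemma ht_zero {t : ℕ} (a : ℤ) (s : Fin t → Bool) : ht a s 0 = a := by
  simp [ht_eq]

lemma ht_succ {t : ℕ} (a : ℤ) (s : Fin t → Bool) (m : ℕ) :
    ht a s (m + 1) = ht a s m + step s m := by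
  simp [ht_eq, Finset.sum_range_succ, add_assoc]

lemma ht_step_cases {t : ℕ} (a : ℤ) (s : Fin t → Bool) {m : ℕ} (hm : m < t) :
    ht a s (m + 1) = ht a s m + 1 ∨ ht a s (m + 1) = ht a s m - 1 := by
  rw [ht_succ]
  unfold step
  rw [dif_pos hm]
  rcases Bool.eq_false_or_eq_true (s ⟨m, hm⟩) with h | h <;> simp [h] <;> ring

lemma ht_congr {t : ℕ} (a : ℤ) {s s' : Fin t → Bool} {m : ℕ}
    (h : ∀ l (hl : l < t), l < m → s ⟨l, hl⟩ = s' ⟨l, hl⟩) (m' : ℕ) (hm' : m' ≤ m) :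
    ht a s m' = ht a s' m' := by
  rw [ht_eq, ht_eq]
  congr 1
  refine Finset.sum_congr rfl fun l hl => ?_
  rw [Finset.mem_range] at hl
  unfold step
  split
  · rw [h l ‹_› (lt_of_lt_of_le hl hm')]
  · rfl

lemma ht_add {t : ℕ} (a : ℤ) (s : Fin t → Bool) {m m' : ℕ} (h : m ≤ m') :
    ht a s m' = ht a s m + ∑ l ∈ Finset.Ico m m', step s l := by
  rw [ht_eq, ht_eq, Finset.range_eq_Ico, ← Finset.sum_Ico_consecutive _ (Nat.zero_le m) h,
    add_assoc, Finset.range_eq_Ico]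

/-- Parity of the height. -/
lemma ht_parity {t : ℕ} (a : ℤ) (s : Fin t → Bool) {m : ℕ} (hm : m ≤ t) :
    ht a s m % 2 = (a + m) % 2 := by
  induction m with
  | zero => simp [ht_zero]
  | succ k ih =>
    have hk : k < t := hm
    have := ih (le_of_lt hk)
    rcases ht_step_cases a s hk with h | h <;> push_cast <;> omega

/-- Discrete crossing lemma. -/
lemma cross (f g : ℕ → ℤ) (T : ℕ)
    (hf : ∀ m < T, f (m + 1) = f m + 1 ∨ f (m + 1) = f m - 1)
    (hg : ∀ m < T, g (m + 1) = g m + 1 ∨ g (m + 1) = g m - 1)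
    (hpar : f 0 % 2 = g 0 % 2) (h0 : f 0 < g 0) (hT : g T < f T) :
    ∃ m ≤ T, f m = g m := by
  have par : ∀ m ≤ T, (g m - f m) % 2 = (g 0 - f 0) % 2 := by
    intro m hm
    induction m with
    | zero => rfl
    | succ k ih =>
      have hk : k < T := hm
      have := ih (le_of_lt hk)
      rcases hf k hk with h1 | h1 <;> rcases hg k hk with h2 | h2 <;> omega
  have key : ∀ m ≤ T, (∀ k ≤ m, f k < g k) ∨ ∃ k ≤ m, f k = g k := by
    intro m hm
    induction m with
    | zero =>
      left; intro k hk; interval_cases k; exact h0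
    | succ j ih =>
      rcases ih (le_of_lt hm) with hall | ⟨k, hk, hke⟩
      · have hj : j < T := hm
        have h1 := hall j le_rfl
        have h2 := par j (le_of_lt hj)
        have hd1 : g (j + 1) - f (j + 1) ≥ g j - f j - 2 := by
          rcases hf j hj with h4 | h4 <;> rcases hg j hj with h5 | h5 <;> omega
        have hd2 : g j - f j ≥ 2 := by omega
        rcases eq_or_lt_of_le (show f (j + 1) ≤ g (j + 1) by omega) with heq | hlt
        · exact Or.inr ⟨j + 1, le_rfl, heq⟩
        · left; intro k hk
          rcases Nat.eq_or_lt_of_le hk with h | h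
          · subst h; exact hlt
          · exact hall k (Nat.lt_succ_iff.mp h)
      · exact Or.inr ⟨k, le_of_lt (Nat.lt_succ_of_le hk), hke⟩
  rcases key T le_rfl with hall | ⟨k, hk, hke⟩
  · exact absurd (hall T le_rfl) (by omega)
  · exact ⟨k, hk, hke⟩


section Swap
variable {n t : ℕ} (A : Fin n → ℤ)

/-- Swap the tails (steps from time `m₀` on) of walks `i` and `j`. -/
def SwapT (i j : Fin n) (m₀ : ℕ) (P : Fin n → Fin t → Bool) : Fin n → Fin t → Bool :=
  fun k l => if (l : ℕ) < m₀ then P k l else P (Equiv.swap i j k) l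

lemma SwapT_invol (i j : Fin n) (m₀ : ℕ) (P : Fin n → Fin t → Bool) :
    SwapT i j m₀ (SwapT i j m₀ P) = P := by
  funext k l
  unfold SwapT
  by_cases h : (l : ℕ) < m₀ <;> simp [h, Equiv.swap_apply_self]

lemma ht_SwapT_le {i j : Fin n} {m₀ : ℕ} (P : Fin n → Fin t → Bool) (k : Fin n)
    {m : ℕ} (hm : m ≤ m₀) :
    ht (A k) (SwapT i j m₀ P k) m = ht (A k) (P k) m := by
  refine ht_congr _ (fun l hl hlm => ?_) m le_rfl
  unfold SwapT
  rw [if_pos (lt_of_lt_of_le hlm hm)]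

lemma ht_SwapT_ge {i j : Fin n} {m₀ : ℕ} {P : Fin n → Fin t → Bool}
    (heq : ht (A i) (P i) m₀ = ht (A j) (P j) m₀) (k : Fin n)
    {m : ℕ} (hm : m₀ ≤ m) :
    ht (A k) (SwapT i j m₀ P k) m
      = ht (A (Equiv.swap i j k)) (P (Equiv.swap i j k)) m := by
  have base : ht (A k) (P k) m₀ = ht (A (Equiv.swap i j k)) (P (Equiv.swap i j k)) m₀ := by
    rcases eq_or_ne k i with rfl | hki
    · rw [Equiv.swap_apply_left]; exact heq
    rcases eq_or_ne k j with rfl | hkj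
    · rw [Equiv.swap_apply_right]; exact heq.symm
    · rw [Equiv.swap_apply_of_ne_of_ne hki hkj]
  have hsum : ∀ l ∈ Finset.Ico m₀ m, step (SwapT i j m₀ P k) l
      = step (P (Equiv.swap i j k)) l := by
    intro l hl
    rw [Finset.mem_Ico] at hl
    unfold step
    split
    · rename_i hlt
      have : SwapT i j m₀ P k ⟨l, hlt⟩ = P (Equiv.swap i j k) ⟨l, hlt⟩ := by
        unfold SwapT
        rw [if_neg (by simp only [Fin.val_mk]; omega)]
      rw [this]
    · rfl
  rw [ht_add _ _ hm, ht_add _ _ hm, ht_SwapT_le A P k le_rfl, base,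
    Finset.sum_congr rfl hsum]

lemma sum_contacts_SwapT {i j : Fin n} {m₀ : ℕ} {P : Fin n → Fin t → Bool}
    (heq : ht (A i) (P i) m₀ = ht (A j) (P j) m₀) :
    ∑ k : Fin n, contacts (A k) (SwapT i j m₀ P k) = ∑ k : Fin n, contacts (A k) (P k) := by
  have hc : ∀ (B : Fin n → ℤ) (Q : Fin n → Fin t → Bool),
      ∑ k : Fin n, contacts (B k) (Q k)
        = ∑ m ∈ Finset.range (t + 1), ∑ k : Fin n, (if ht (B k) (Q k) m = 0 then 1 else 0) := by
    intro B Q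
    rw [Finset.sum_comm]
    refine Finset.sum_congr rfl fun k _ => ?_
    rw [contacts, Finset.card_filter]
  rw [hc, hc]
  refine Finset.sum_congr rfl fun m _ => ?_
  by_cases hm : m < m₀
  · refine Finset.sum_congr rfl fun k _ => ?_
    rw [ht_SwapT_le A P k (le_of_lt hm)]
  · push_neg at hm
    rw [← Equiv.sum_comp (Equiv.swap i j) fun k => if ht (A k) (P k) m = 0 then (1:ℕ) else 0]
    refine Finset.sum_congr rfl fun k _ => ?_
    rw [ht_SwapT_ge A heq k hm]
end Swap

section Meet
variable {n t : ℕ} (A : Fin n → ℤ)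

def MeetAt (P : Fin n → Fin t → Bool) (m : ℕ) : Prop :=
  ∃ i j : Fin n, i < j ∧ ht (A i) (P i) m = ht (A j) (P j) m

def HasMeet (P : Fin n → Fin t → Bool) : Prop :=
  ∃ m, m ≤ t ∧ MeetAt A P m

open Classical in
noncomputable def fm (P : Fin n → Fin t → Bool) (h : HasMeet A P) : ℕ := Nat.find h

open Classical in
lemma fm_spec (P : Fin n → Fin t → Bool) (h : HasMeet A P) :
    fm A P h ≤ t ∧ MeetAt A P (fm A P h) := Nat.find_spec h

open Classical in
lemma fm_min (P : Fin n → Fin t → Bool) (h : HasMeet A P) {m : ℕ}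
    (hm : m < fm A P h) : ¬(m ≤ t ∧ MeetAt A P m) := Nat.find_min h hm

open Classical in
noncomputable def fiS (P : Fin n → Fin t → Bool) (m : ℕ) : Finset (Fin n) :=
  Finset.univ.filter (fun i => ∃ j, i < j ∧ ht (A i) (P i) m = ht (A j) (P j) m)

open Classical in
noncomputable def fjS (P : Fin n → Fin t → Bool) (m : ℕ) (i : Fin n) : Finset (Fin n) :=
  Finset.univ.filter (fun j => i < j ∧ ht (A i) (P i) m = ht (A j) (P j) m)

open Classical in
lemma fiS_nonempty {P : Fin n → Fin t → Bool} {m : ℕ} (h : MeetAt A P m) :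
    (fiS A P m).Nonempty := by
  obtain ⟨i, j, hij, he⟩ := h
  exact ⟨i, by simp only [fiS, Finset.mem_filter, Finset.mem_univ, true_and]; exact ⟨j, hij, he⟩⟩

noncomputable def fi (P : Fin n → Fin t → Bool) (h : HasMeet A P) : Fin n :=
  (fiS A P (fm A P h)).min' (fiS_nonempty A (fm_spec A P h).2)

open Classical in
lemma fjS_nonempty {P : Fin n → Fin t → Bool} (h : HasMeet A P) :
    (fjS A P (fm A P h) (fi A P h)).Nonempty := by
  have := (fiS A P (fm A P h)).min'_mem (fiS_nonempty A (fm_spec A P h).2)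
  rw [show (fiS A P (fm A P h)).min' _ = fi A P h from rfl] at this
  simp only [fiS, Finset.mem_filter, Finset.mem_univ, true_and] at this
  obtain ⟨j, hij, he⟩ := this
  exact ⟨j, by simp only [fjS, Finset.mem_filter, Finset.mem_univ, true_and]; exact ⟨hij, he⟩⟩

noncomputable def fj (P : Fin n → Fin t → Bool) (h : HasMeet A P) : Fin n :=
  (fjS A P (fm A P h) (fi A P h)).min' (fjS_nonempty A h)

open Classical in
lemma fij_spec (P : Fin n → Fin t → Bool) (h : HasMeet A P) :
    fi A P h < fj A P h ∧
      ht (A (fi A P h)) (P (fi A P h)) (fm A P h)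
        = ht (A (fj A P h)) (P (fj A P h)) (fm A P h) := by
  have := (fjS A P (fm A P h) (fi A P h)).min'_mem (fjS_nonempty A h)
  rw [show (fjS A P (fm A P h) (fi A P h)).min' _ = fj A P h from rfl] at this
  simpa only [fjS, Finset.mem_filter, Finset.mem_univ, true_and] using this

open Classical in
/-- If two families have the same heights up to time `fm`, the canonical meet data agree. -/
lemma frozen {P P' : Fin n → Fin t → Bool} (h : HasMeet A P) (h' : HasMeet A P')
    (hht : ∀ k m, m ≤ fm A P h → ht (A k) (P' k) m = ht (A k) (P k) m) :
    fm A P' h' = fm A P h ∧ fi A P' h' = fi A P h ∧ fj A P' h' = fj A P h := by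
  have hfm : fm A P' h' = fm A P h := by
    have h1 : fm A P' h' ≤ fm A P h := by
      apply Nat.find_le
      refine ⟨(fm_spec A P h).1, ?_⟩
      obtain ⟨i, j, hij, he⟩ := (fm_spec A P h).2
      exact ⟨i, j, hij, by rw [hht i _ le_rfl, hht j _ le_rfl]; exact he⟩
    have h2 : ¬ (fm A P' h' < fm A P h) := by
      intro hlt
      obtain ⟨hle, i, j, hij, he⟩ := Nat.find_spec h'
      refine fm_min A P h hlt ⟨hle, i, j, hij, ?_⟩
      rw [← hht i _ (le_of_lt hlt), ← hht j _ (le_of_lt hlt)]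
      exact he
    omega
  have hSet : fiS A P' (fm A P' h') = fiS A P (fm A P h) := by
    rw [hfm]
    unfold fiS
    refine Finset.filter_congr fun i _ => ?_
    constructor
    · rintro ⟨j, hij, he⟩
      exact ⟨j, hij, by rw [← hht i _ le_rfl, ← hht j _ le_rfl]; exact he⟩
    · rintro ⟨j, hij, he⟩
      exact ⟨j, hij, by rw [hht i _ le_rfl, hht j _ le_rfl]; exact he⟩
  have hfi : fi A P' h' = fi A P h := by
    simp only [fi, hSet]
  refine ⟨hfm, hfi, ?_⟩
  have hSet2 : fjS A P' (fm A P' h') (fi A P' h') = fjS A P (fm A P h) (fi A P h) := by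
    rw [hfm, hfi]
    unfold fjS
    refine Finset.filter_congr fun j _ => ?_
    rw [hht _ _ le_rfl, hht _ _ le_rfl]
  simp only [fj, hSet2]
end Meet

section Invol
variable {n t : ℕ} (A : Fin n → ℤ)

open Classical in
noncomputable def G (p : Equiv.Perm (Fin n) × (Fin n → Fin t → Bool)) :
    Equiv.Perm (Fin n) × (Fin n → Fin t → Bool) :=
  if h : HasMeet A p.2 then
    (p.1 * Equiv.swap (fi A p.2 h) (fj A p.2 h),
      SwapT (fi A p.2 h) (fj A p.2 h) (fm A p.2 h) p.2)
  else p

lemma hasMeet_SwapT {P : Fin n → Fin t → Bool} (h : HasMeet A P) :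
    HasMeet A (SwapT (fi A P h) (fj A P h) (fm A P h) P) := by
  refine ⟨fm A P h, (fm_spec A P h).1, fi A P h, fj A P h, (fij_spec A P h).1, ?_⟩
  rw [ht_SwapT_le A P _ le_rfl, ht_SwapT_le A P _ le_rfl]
  exact (fij_spec A P h).2

lemma G_apply (p : Equiv.Perm (Fin n) × (Fin n → Fin t → Bool)) (h : HasMeet A p.2) :
    G A p = (p.1 * Equiv.swap (fi A p.2 h) (fj A p.2 h),
      SwapT (fi A p.2 h) (fj A p.2 h) (fm A p.2 h) p.2) := dif_pos h

lemma G_G (p : Equiv.Perm (Fin n) × (Fin n → Fin t → Bool)) (h : HasMeet A p.2) :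
    G A (G A p) = p := by
  rw [G_apply A p h]
  have h' := hasMeet_SwapT A h
  rw [G_apply A _ h']
  obtain ⟨hfm, hfi, hfj⟩ := frozen A h h' (fun k m hm => ht_SwapT_le A p.2 k hm)
  simp only [hfm, hfi, hfj]
  refine Prod.ext ?_ ?_
  · simp [mul_assoc, Equiv.swap_mul_self]
  · simp [SwapT_invol]

lemma G_ne (p : Equiv.Perm (Fin n) × (Fin n → Fin t → Bool)) (h : HasMeet A p.2) :
    G A p ≠ p := by
  rw [G_apply A p h]
  intro hcontra
  have h1 : p.1 * Equiv.swap (fi A p.2 h) (fj A p.2 h) = p.1 := congrArg Prod.fst hcontra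
  have h2 : Equiv.swap (fi A p.2 h) (fj A p.2 h) = 1 :=
    mul_left_cancel (h1.trans (mul_one p.1).symm)
  have := (fij_spec A p.2 h).1
  rw [Equiv.swap_eq_one_iff] at h2
  exact absurd h2 (ne_of_lt this)

/-- A strictly monotone permutation of `Fin n` is the identity. -/
lemma perm_eq_one_of_strictMono {σ : Equiv.Perm (Fin n)}
    (h : StrictMono (σ : Fin n → Fin n)) : σ = 1 := by
  have hr : Set.range (σ : Fin n → Fin n) = Set.range (id : Fin n → Fin n) := by
    rw [Set.range_id, σ.surjective.range_eq]
  have := (@StrictMono.range_inj (Fin n) (Fin n) _ _ (inferInstance : WellFoundedLT (Fin n)) _ _ h (strictMono_id (α := Fin n))).1 hr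
  ext x
  rw [show (σ : Fin n → Fin n) x = id x from congrFun this x]
  rfl

lemma exists_inversion {σ : Equiv.Perm (Fin n)} (h : σ ≠ 1) :
    ∃ i j : Fin n, i < j ∧ σ j < σ i := by
  by_contra hc
  push_neg at hc
  refine h (perm_eq_one_of_strictMono ?_)
  intro i j hij
  rcases lt_trichotomy (σ i) (σ j) with h1 | h1 | h1
  · exact h1
  · exact absurd (σ.injective h1) (ne_of_lt hij)
  · exact absurd h1 (not_lt.mpr (hc i j hij))

end Invol

section Main
variable {n t : ℕ}

/-- The condition that each walk in the family runs from `A k` to `E (σ k)`. -/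
def Cf (A E : Fin n → ℤ) (p : Equiv.Perm (Fin n) × (Fin n → Fin t → Bool)) : Prop :=
  ∀ k, WalkOK (A k) (E (p.1 k)) (p.2 k)

/-- Total number of contacts. -/
def Wf (A : Fin n → ℤ) (P : Fin n → Fin t → Bool) : ℕ :=
  ∑ k, contacts (A k) (P k)

open Classical in
/-- The signed weight. -/
noncomputable def Ff (A E : Fin n → ℤ) (κ : ℝ)
    (p : Equiv.Perm (Fin n) × (Fin n → Fin t → Bool)) : ℝ :=
  if Cf A E p then ((Equiv.Perm.sign p.1 : ℤ) : ℝ) * κ ^ Wf A p.2 else 0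

lemma Cf_G {A E : Fin n → ℤ} {p : Equiv.Perm (Fin n) × (Fin n → Fin t → Bool)}
    (hC : Cf A E p) (hM : HasMeet A p.2) : Cf A E (G A p) := by
  rw [G_apply A p hM]
  have heq := (fij_spec A p.2 hM).2
  intro k
  constructor
  · have h1 := ht_SwapT_ge A heq k (fm_spec A p.2 hM).1 (m := t)
    rw [h1]
    have := (hC (Equiv.swap (fi A p.2 hM) (fj A p.2 hM) k)).1
    simpa [Equiv.Perm.mul_apply] using this
  · intro m hm
    rcases le_total m (fm A p.2 hM) with h | h
    · rw [ht_SwapT_le A p.2 k h]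
      exact (hC k).2 m hm
    · rw [ht_SwapT_ge A heq k h]
      exact (hC _).2 m hm

open Classical in
lemma Z1_expand (t : ℕ) (x y : ℤ) (κ : ℝ) :
    Z1 t x y κ
      = ∑ s ∈ Finset.univ.filter (fun s : Fin t → Bool => WalkOK x y s), κ ^ contacts x s := by
  rw [Z1, Zpart, Zgen]
  refine Finset.sum_bij' (i := fun P _ => P 0) (j := fun s _ => fun _ => s)
    ?_ ?_ ?_ ?_ ?_
  · intro P hP
    simp only [Finset.mem_filter, Finset.mem_univ, true_and] at hP ⊢
    exact hP.1 0
  · intro s hs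
    simp only [Finset.mem_filter, Finset.mem_univ, true_and] at hs ⊢
    exact ⟨fun i => hs, fun i j hij => absurd (Subsingleton.elim i j) hij⟩
  · intro P hP
    funext k
    have : k = 0 := Subsingleton.elim k 0
    subst this
    rfl
  · intro s hs
    rfl
  · intro P hP
    rw [Fin.sum_univ_one]

open Classical in
/-- The Lindström–Gessel–Viennot argument. -/
lemma LGVmain (n t : ℕ) (A E : Fin n → ℤ)
    (hA : StrictMono A) (hE : StrictMono E)
    (hApar : ∀ i j, A i % 2 = A j % 2) (κ : ℝ) :
    Zpart n t A E κ = (Matrix.of fun i j : Fin n => Z1 t (A j) (E i) κ).det := by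
  classical
  -- Step 1 : the determinant as a sum over pairs (σ, P)
  have hdet : (Matrix.of fun i j : Fin n => Z1 t (A j) (E i) κ).det
      = ∑ p : Equiv.Perm (Fin n) × (Fin n → Fin t → Bool), Ff A E κ p := by
    rw [Matrix.det_apply', Fintype.sum_prod_type]
    refine Finset.sum_congr rfl fun σ _ => ?_
    have hM : ∀ k : Fin n,
        (Matrix.of fun i j : Fin n => Z1 t (A j) (E i) κ) (σ k) k
          = ∑ s ∈ Finset.univ.filter (fun s : Fin t → Bool => WalkOK (A k) (E (σ k)) s),
              κ ^ contacts (A k) s := by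
      intro k
      rw [Matrix.of_apply]
      exact Z1_expand t (A k) (E (σ k)) κ
    rw [Finset.prod_congr rfl (fun k _ => hM k), Finset.prod_univ_sum]
    have hset : Fintype.piFinset
          (fun k => Finset.univ.filter (fun s : Fin t → Bool => WalkOK (A k) (E (σ k)) s))
        = Finset.univ.filter (fun P : Fin n → Fin t → Bool => Cf A E (σ, P)) := by
      ext P
      rw [Finset.mem_filter]
      simp [Fintype.mem_piFinset, Cf]
    rw [hset, Finset.sum_filter, Finset.mul_sum]
    refine Finset.sum_congr rfl fun P _ => ?_
    rw [Finset.prod_pow_eq_pow_sum]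
    simp only [Ff, Wf, mul_ite, mul_zero]
  -- Step 2 : the partition function as the sum over "good" pairs
  have hcross : ∀ p : Equiv.Perm (Fin n) × (Fin n → Fin t → Bool),
      Cf A E p → ¬ HasMeet A p.2 → p.1 = 1 := by
    intro p hC hNM
    by_contra hne
    obtain ⟨i, j, hij, hinv⟩ := exists_inversion hne
    obtain ⟨m, hm, he⟩ := cross (ht (A i) (p.2 i)) (ht (A j) (p.2 j)) t
      (fun m hm => ht_step_cases _ _ hm) (fun m hm => ht_step_cases _ _ hm)
      (by rw [ht_zero, ht_zero]; exact hApar i j)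
      (by rw [ht_zero, ht_zero]; exact hA hij)
      (by rw [(hC i).1, (hC j).1]; exact hE hinv)
    exact hNM ⟨m, hm, i, j, hij, he⟩
  have hZ : Zpart n t A E κ
      = ∑ p ∈ Finset.univ.filter
          (fun p : Equiv.Perm (Fin n) × (Fin n → Fin t → Bool) =>
            Cf A E p ∧ ¬ HasMeet A p.2), Ff A E κ p := by
    rw [Zpart, Zgen]
    have hFam : ∀ P : Fin n → Fin t → Bool,
        FamilyOK (fun _ => t) A E P ↔ (Cf A E ((1 : Equiv.Perm (Fin n)), P) ∧ ¬ HasMeet A P) := by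
      intro P
      constructor
      · rintro ⟨h1, h2⟩
        refine ⟨fun k => by simpa using h1 k, ?_⟩
        rintro ⟨m, hm, i, j, hij, he⟩
        exact h2 i j (ne_of_lt hij) m hm hm he
      · rintro ⟨h1, h2⟩
        refine ⟨fun k => by simpa using h1 k, ?_⟩
        intro i j hij m hm _ he
        rcases lt_or_gt_of_ne hij with h | h
        · exact h2 ⟨m, hm, i, j, h, he⟩
        · exact h2 ⟨m, hm, j, i, h, he.symm⟩
    refine Finset.sum_bij' (i := fun P _ => ((1 : Equiv.Perm (Fin n)), P))
      (j := fun p _ => p.2) ?_ ?_ ?_ ?_ ?_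
    · intro P hP
      simp only [Finset.mem_filter, Finset.mem_univ, true_and] at hP ⊢
      exact (hFam P).1 hP
    · intro p hp
      simp only [Finset.mem_filter, Finset.mem_univ, true_and] at hp ⊢
      refine (hFam p.2).2 ?_
      rcases hp with ⟨h1, h2⟩
      rw [← hcross p h1 h2]
      exact ⟨h1, h2⟩
    · intro P hP
      rfl
    · intro p hp
      simp only [Finset.mem_filter, Finset.mem_univ, true_and] at hp
      rcases hp with ⟨h1, h2⟩
      show ((1 : Equiv.Perm (Fin n)), p.2) = p
      rw [← Prod.mk.eta (p := p), hcross p h1 h2]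
    · intro P hP
      simp only [Finset.mem_filter, Finset.mem_univ, true_and] at hP
      rw [Ff, if_pos ((hFam P).1 hP).1]
      simp [Wf]
  -- Step 3 : splitting the full sum
  have hsub : Finset.univ.filter
        (fun p : Equiv.Perm (Fin n) × (Fin n → Fin t → Bool) => Cf A E p ∧ HasMeet A p.2)
      ⊆ Finset.univ.filter
        (fun p : Equiv.Perm (Fin n) × (Fin n → Fin t → Bool) =>
          ¬(Cf A E p ∧ ¬ HasMeet A p.2)) := by
    intro p hp
    simp only [Finset.mem_filter, Finset.mem_univ, true_and] at hp ⊢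
    tauto
  have hsplit : ∑ p : Equiv.Perm (Fin n) × (Fin n → Fin t → Bool), Ff A E κ p
      = (∑ p ∈ Finset.univ.filter
            (fun p : Equiv.Perm (Fin n) × (Fin n → Fin t → Bool) =>
              Cf A E p ∧ ¬ HasMeet A p.2), Ff A E κ p)
        + ∑ p ∈ Finset.univ.filter
            (fun p : Equiv.Perm (Fin n) × (Fin n → Fin t → Bool) =>
              Cf A E p ∧ HasMeet A p.2), Ff A E κ p := by
    rw [← Finset.sum_filter_add_sum_filter_not Finset.univ
      (fun p : Equiv.Perm (Fin n) × (Fin n → Fin t → Bool) => Cf A E p ∧ ¬ HasMeet A p.2)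
      (Ff A E κ)]
    congr 1
    refine (Finset.sum_subset hsub ?_).symm
    intro p hp hnp
    simp only [Finset.mem_filter, Finset.mem_univ, true_and] at hp hnp
    have : ¬ Cf A E p := by tauto
    rw [Ff, if_neg this]
  -- Step 4 : the bad pairs cancel
  have hbad : ∑ p ∈ Finset.univ.filter
      (fun p : Equiv.Perm (Fin n) × (Fin n → Fin t → Bool) =>
        Cf A E p ∧ HasMeet A p.2), Ff A E κ p = 0 := by
    refine Finset.sum_involution (fun p _ => G A p) ?_ ?_ ?_ ?_
    · intro p hp
      simp only [Finset.mem_filter, Finset.mem_univ, true_and] at hp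
      obtain ⟨hC, hM⟩ := hp
      have hC' := Cf_G hC hM
      have hij := (fij_spec A p.2 hM).1
      have heq := (fij_spec A p.2 hM).2
      have hw : Wf A (SwapT (fi A p.2 hM) (fj A p.2 hM) (fm A p.2 hM) p.2) = Wf A p.2 :=
        sum_contacts_SwapT A heq
      have hs : Equiv.Perm.sign (p.1 * Equiv.swap (fi A p.2 hM) (fj A p.2 hM))
          = - Equiv.Perm.sign p.1 := by
        rw [map_mul, Equiv.Perm.sign_swap (ne_of_lt hij)]
        exact mul_neg_one _
      show Ff A E κ p + Ff A E κ (G A p) = 0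
      simp only [Ff]
      rw [if_pos hC, if_pos hC', G_apply A p hM, hw, hs]
      push_cast
      ring
    · intro p hp _
      simp only [Finset.mem_filter, Finset.mem_univ, true_and] at hp
      exact G_ne A p hp.2
    · intro p hp
      simp only [Finset.mem_filter, Finset.mem_univ, true_and] at hp ⊢
      obtain ⟨hC, hM⟩ := hp
      refine ⟨Cf_G hC hM, ?_⟩
      show HasMeet A (G A p).2
      rw [G_apply A p hM]
      exact hasMeet_SwapT A hM
    · intro p hp
      simp only [Finset.mem_filter, Finset.mem_univ, true_and] at hp
      exact G_G A p hp.2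
  rw [hdet, hsplit, hbad, add_zero, hZ]
end Main
end LGVaux
/-- Lindström–Gessel–Viennot determinant for the partition function. -/
theorem statement2 (n t : ℕ) (hn : 1 ≤ n) (a e : Fin n → ℕ)
    (ha : StrictMono a) (he : StrictMono e)
    (hapar : ∀ i j, a i % 2 = a j % 2) (hepar : ∀ i j, e i % 2 = e j % 2)
    (hte : ∀ i, (a i + e i) % 2 = t % 2) (κ : ℝ) (hκ : 0 < κ) :
    Zpart n t (fun i => (a i : ℤ)) (fun i => (e i : ℤ)) κ =
      (Matrix.of fun i j : Fin n => Z1 t (a j : ℤ) (e i : ℤ) κ).det := by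
  exact LGVaux.LGVmain n t (fun i => (a i : ℤ)) (fun i => (e i : ℤ))
    (fun i j hij => by simp only [Int.ofNat_lt]; exact ha hij)
    (fun i j hij => by simp only [Int.ofNat_lt]; exact he hij)
    (fun i j => by have := hapar i j; omega) κ
end
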